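/- For n ≥ 3k, the graph G = K_k ∨ (n−k)K_1 (the join of a complete graph on k vertices with n−k isolated vertices) satisfies κ_k(G) = λ_k(G) = κ(G) = λ(G) = δ(G) = k. -/

import Mathlib

open SimpleGraph

variable {V : Type*}

/-- An `S`-Steiner tree in `G`: a subgraph of `G` that is a tree and contains all of `S`. -/
def IsSteinerTree (G : SimpleGraph V) (S : Set V) (T : G.Subgraph) : Prop :=
  S ⊆ T.verts ∧ T.coe.IsTree

/-- The maximum number of pairwise edge-disjoint `S`-Steiner trees in `G`. -/
noncomputable def steinerEdgeConn (G : SimpleGraph V) (S : Set V) : ℕ :=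
  sSup {n : ℕ | ∃ f : Fin n → G.Subgraph, (∀ i, IsSteinerTree G S (f i)) ∧
    ∀ i j, i ≠ j → Disjoint (f i).edgeSet (f j).edgeSet}

/-- The maximum number of pairwise internally disjoint `S`-Steiner trees in `G`. -/
noncomputable def steinerConn (G : SimpleGraph V) (S : Set V) : ℕ :=
  sSup {n : ℕ | ∃ f : Fin n → G.Subgraph, (∀ i, IsSteinerTree G S (f i)) ∧
    ∀ i j, i ≠ j → Disjoint (f i).edgeSet (f j).edgeSet ∧
      (f i).verts ∩ (f j).verts = S}

/-- The generalized `k`-edge-connectivity `λ_k(G)`. -/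
noncomputable def genEdgeConn (G : SimpleGraph V) (k : ℕ) : ℕ :=
  sInf {m : ℕ | ∃ S : Set V, S.ncard = k ∧ steinerEdgeConn G S = m}

/-- The generalized `k`-connectivity `κ_k(G)`. -/
noncomputable def genConn (G : SimpleGraph V) (k : ℕ) : ℕ :=
  sInf {m : ℕ | ∃ S : Set V, S.ncard = k ∧ steinerConn G S = m}

/-- The edge-connectivity `λ(G)`: the least size of a set of edges whose removal
disconnects the graph. -/
noncomputable def edgeConn (G : SimpleGraph V) : ℕ :=
  sInf {m : ℕ | ∃ M : Set (Sym2 V), M ⊆ G.edgeSet ∧ M.ncard = m ∧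
    ¬ (G.deleteEdges M).Connected}

/-- The vertex-connectivity `κ(G)`: the least size of a set of vertices whose removal
leaves a non-connected graph. -/
noncomputable def vertConn (G : SimpleGraph V) : ℕ :=
  sInf {m : ℕ | ∃ A : Set V, A.ncard = m ∧ ¬ (G.induce (Aᶜ : Set V)).Connected}


/-- The minimum degree `δ(G)` (as the least cardinality of a neighbor set). -/
noncomputable def minDeg (G : SimpleGraph V) : ℕ :=
  sInf {d : ℕ | ∃ v : V, (G.neighborSet v).ncard = d}



lemma acyclic_of_two_hubs {X : Type*} (H : SimpleGraph X) (p q : X)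
    (hdeg : ∀ x, x ≠ p → x ≠ q → ∀ y z, H.Adj x y → H.Adj x z → y = z) :
    H.IsAcyclic := by
  classical
  intro v c hc
  -- find a non-hub vertex in the support
  have hlen : 3 ≤ c.length := hc.three_le_length
  have hnd : c.support.tail.Nodup := hc.support_nodup
  have htl : c.support.tail.length = c.length := by
    have h1 := c.length_support
    have h2 : c.support.tail.length = c.support.length - 1 := by simp [List.length_tail]
    omega
  have hx : ∃ x ∈ c.support.tail, x ≠ p ∧ x ≠ q := by
    by_contra h
    push_neg at h
    have hsub : c.support.tail.toFinset ⊆ {p, q} := by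
      intro x hx
      rcases List.mem_toFinset.1 hx with hx'
      rcases h x hx' with h1
      by_cases hp : x = p
      · simp [hp]
      · simp [h1 hp]
    have hcard : c.support.tail.toFinset.card ≤ 2 := by
      calc c.support.tail.toFinset.card ≤ ({p, q} : Finset X).card := Finset.card_le_card hsub
        _ ≤ 2 := Finset.card_insert_le _ _ |>.trans (by simp)
    rw [List.toFinset_card_of_nodup hnd] at hcard
    omega
  obtain ⟨x, hxt, hxp, hxq⟩ := hx
  have hxs : x ∈ c.support := List.mem_of_mem_tail hxt
  have hc' : (c.rotate x hxs).IsCycle := hc.rotate hxs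
  revert hc'
  generalize c.rotate x hxs = c'
  intro hc'
  cases c' with
  | nil => exact hc'.not_of_nil
  | cons hadj p =>
    rw [Walk.cons_isCycle_iff] at hc'
    have hxb : x ≠ _ := hadj.ne
    obtain ⟨z, hadj2, q', hq'⟩ := Walk.exists_eq_cons_of_ne hxb p.reverse
    have hz : z = _ := hdeg x hxp hxq z _ hadj2 hadj
    have hmem : s(x, z) ∈ p.reverse.edges := by
      rw [hq']; simp
    rw [Walk.edges_reverse, List.mem_reverse] at hmem
    rw [hz] at hmem
    exact hc'.2 hmem

lemma steiner_edge_at {G : SimpleGraph V} {S : Set V} {T : G.Subgraph}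
    (hT : IsSteinerTree G S T) {s t : V} (hs : s ∈ S) (ht : t ∈ S) (hst : s ≠ t) :
    ∃ x, T.Adj s x := by
  have h1 : (⟨s, hT.1 hs⟩ : T.verts) ≠ ⟨t, hT.1 ht⟩ := by
    simp only [ne_eq, Subtype.mk.injEq]; exact hst
  obtain ⟨w⟩ := hT.2.isConnected.preconnected ⟨s, hT.1 hs⟩ ⟨t, hT.1 ht⟩
  obtain ⟨z, hadj, q', -⟩ := Walk.exists_eq_cons_of_ne h1 w
  exact ⟨z, hadj⟩

lemma steiner_count_bound [Finite V] {G : SimpleGraph V} {S : Set V} {m : ℕ}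
    {f : Fin m → G.Subgraph} (hf : ∀ i, IsSteinerTree G S (f i))
    (hdisj : ∀ i j, i ≠ j → Disjoint (f i).edgeSet (f j).edgeSet)
    {s t : V} (hs : s ∈ S) (ht : t ∈ S) (hst : s ≠ t) :
    m ≤ (G.neighborSet s).ncard := by
  choose x hx using fun i => steiner_edge_at (hf i) hs ht hst
  have hinj : Function.Injective x := by
    intro i j hij
    by_contra hne
    have h1 : s(s, x i) ∈ (f i).edgeSet := Subgraph.mem_edgeSet.2 (hx i)
    have h2 : s(s, x i) ∈ (f j).edgeSet := Subgraph.mem_edgeSet.2 (hij ▸ hx j)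
    exact Set.disjoint_left.1 (hdisj i j hne) h1 h2
  have hsub : Set.range x ⊆ G.neighborSet s := by
    rintro _ ⟨i, rfl⟩
    exact (hx i).adj_sub
  calc m = Nat.card (Fin m) := by simp
    _ = (Set.range x).ncard := by
        rw [← Nat.card_coe_set_eq, Nat.card_range_of_injective hinj]
    _ ≤ _ := Set.ncard_le_ncard hsub (Set.toFinite _)

/-- A double star: `c` is joined to the "high" vertices of `S`, `t` to the "low" ones. -/
def dstar {n : ℕ} (G : SimpleGraph (Fin n)) (k : ℕ) (S : Set (Fin n)) (c t : Fin n)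
    (hc : ∀ y ∈ S, k ≤ (y : ℕ) → G.Adj c y) (ht : ∀ y ∈ S, (y : ℕ) < k → G.Adj t y) :
    G.Subgraph where
  verts := S ∪ {c, t}
  Adj x y := (x = c ∧ y ∈ S ∧ k ≤ (y : ℕ)) ∨ (x = t ∧ y ∈ S ∧ (y : ℕ) < k)
    ∨ (y = c ∧ x ∈ S ∧ k ≤ (x : ℕ)) ∨ (y = t ∧ x ∈ S ∧ (x : ℕ) < k)
  adj_sub := by
    rintro x y (⟨rfl, h1, h2⟩ | ⟨rfl, h1, h2⟩ | ⟨rfl, h1, h2⟩ | ⟨rfl, h1, h2⟩)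
    · exact hc y h1 h2
    · exact ht y h1 h2
    · exact (hc x h1 h2).symm
    · exact (ht x h1 h2).symm
  edge_vert := by
    rintro x y (⟨rfl, -⟩ | ⟨rfl, -⟩ | ⟨-, h, -⟩ | ⟨-, h, -⟩)
    · exact Or.inr (Or.inl rfl)
    · exact Or.inr (Or.inr rfl)
    · exact Or.inl h
    · exact Or.inl h
  symm := by
    constructor
    rintro x y (h | h | h | h)
    · exact Or.inr (Or.inr (Or.inl h))
    · exact Or.inr (Or.inr (Or.inr h))
    · exact Or.inl h
    · exact Or.inr (Or.inl h)

section dstar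
variable {n k : ℕ} {G : SimpleGraph (Fin n)} {S : Set (Fin n)} {c t : Fin n}
  {hc : ∀ y ∈ S, k ≤ (y : ℕ) → G.Adj c y} {ht : ∀ y ∈ S, (y : ℕ) < k → G.Adj t y}

lemma dstar_verts : (dstar G k S c t hc ht).verts = S ∪ {c, t} := rfl

lemma dstar_adj_cases {x y : Fin n} (h : (dstar G k S c t hc ht).Adj x y) :
    (∃ b ∈ S, k ≤ (b : ℕ) ∧ s(x, y) = s(c, b)) ∨
      (∃ a ∈ S, (a : ℕ) < k ∧ s(x, y) = s(t, a)) := by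
  rcases h with ⟨rfl, h1, h2⟩ | ⟨rfl, h1, h2⟩ | ⟨rfl, h1, h2⟩ | ⟨rfl, h1, h2⟩
  · exact Or.inl ⟨y, h1, h2, rfl⟩
  · exact Or.inr ⟨y, h1, h2, rfl⟩
  · exact Or.inl ⟨x, h1, h2, Sym2.eq_swap⟩
  · exact Or.inr ⟨x, h1, h2, Sym2.eq_swap⟩

lemma dstar_isTree (htc : t = c ∨ (c ∈ S ∧ (c : ℕ) < k)) :
    (dstar G k S c t hc ht).coe.IsTree := by
  have hcV : c ∈ (dstar G k S c t hc ht).verts := Or.inr (Or.inl rfl)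
  have htV : t ∈ (dstar G k S c t hc ht).verts := Or.inr (Or.inr rfl)
  have req : ∀ a b : ↑(dstar G k S c t hc ht).verts, a = b →
      Reachable (dstar G k S c t hc ht).coe a b := fun a b h => h ▸ Reachable.refl a
  have htc' : Reachable (dstar G k S c t hc ht).coe ⟨t, htV⟩ ⟨c, hcV⟩ := by
    rcases htc with h | ⟨h1, h2⟩
    · exact req _ _ (Subtype.ext h)
    · exact (Adj.reachable (show (dstar G k S c t hc ht).Adj t c from
        Or.inr (Or.inl ⟨rfl, h1, h2⟩)))
  have hreach : ∀ (x : Fin n) (hx : x ∈ (dstar G k S c t hc ht).verts),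
      Reachable (dstar G k S c t hc ht).coe ⟨x, hx⟩ ⟨c, hcV⟩ := by
    intro x hx
    rcases hx with hxS | hxc | hxt
    · by_cases hxk : (x : ℕ) < k
      · exact (Adj.reachable (show (dstar G k S c t hc ht).Adj x t from
          Or.inr (Or.inr (Or.inr ⟨rfl, hxS, hxk⟩)))).trans htc'
      · exact Adj.reachable (show (dstar G k S c t hc ht).Adj x c from
          Or.inr (Or.inr (Or.inl ⟨rfl, hxS, not_lt.1 hxk⟩)))
    · exact req _ _ (Subtype.ext hxc)
    · exact (req _ _ (Subtype.ext (Set.mem_singleton_iff.1 hxt))).trans htc'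
  constructor
  · haveI : Nonempty ↑(dstar G k S c t hc ht).verts := ⟨⟨c, hcV⟩⟩
    exact ⟨fun a b => (hreach a.1 a.2).trans (hreach b.1 b.2).symm⟩
  · apply acyclic_of_two_hubs _ (⟨c, hcV⟩ : (dstar G k S c t hc ht).verts) ⟨t, htV⟩
    intro x hxc hxt y z h1 h2
    have hx1 : x.1 ≠ c := fun h => hxc (Subtype.ext h)
    have hx2 : x.1 ≠ t := fun h => hxt (Subtype.ext h)
    have key : ∀ w : (dstar G k S c t hc ht).verts,
        (dstar G k S c t hc ht).coe.Adj x w →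
        ((w : Fin n) = c ∧ k ≤ (x.1 : ℕ)) ∨ ((w : Fin n) = t ∧ (x.1 : ℕ) < k) := by
      intro w hw
      rcases hw with ⟨h, -⟩ | ⟨h, -⟩ | ⟨h, h3, h4⟩ | ⟨h, h3, h4⟩
      · exact absurd h hx1
      · exact absurd h hx2
      · exact Or.inl ⟨h, h4⟩
      · exact Or.inr ⟨h, h4⟩
    rcases key y h1 with ⟨hy, hk⟩ | ⟨hy, hk⟩ <;> rcases key z h2 with ⟨hz, hk'⟩ | ⟨hz, hk'⟩
    · exact Subtype.ext (hy.trans hz.symm)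
    · omega
    · omega
    · exact Subtype.ext (hy.trans hz.symm)

end dstar

lemma ncard_lt_k (n k : ℕ) (hkn : k ≤ n) :
    ({v : Fin n | (v : ℕ) < k} : Set (Fin n)).ncard = k := by
  have : ({v : Fin n | (v : ℕ) < k} : Set (Fin n)) =
      Set.range (fun i : Fin k => (⟨i.1, lt_of_lt_of_le i.2 hkn⟩ : Fin n)) := by
    ext v
    simp only [Set.mem_setOf_eq, Set.mem_range]
    constructor
    · intro hv; exact ⟨⟨v.1, hv⟩, by simp⟩
    · rintro ⟨i, rfl⟩; exact i.2
  rw [this, ← Nat.card_coe_set_eq,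
    Nat.card_range_of_injective (fun a b hab => by
      apply Fin.ext
      simpa [Fin.ext_iff] using hab)]
  simp

lemma ncard_ge_k (n k : ℕ) (hkn : k ≤ n) :
    ({v : Fin n | k ≤ (v : ℕ)} : Set (Fin n)).ncard = n - k := by
  have hc : ({v : Fin n | k ≤ (v : ℕ)} : Set (Fin n)) = {v : Fin n | (v : ℕ) < k}ᶜ := by
    ext v; simp [not_lt]
  have h2 := Set.ncard_add_ncard_compl ({v : Fin n | (v : ℕ) < k} : Set (Fin n))
  rw [ncard_lt_k n k hkn] at h2
  rw [hc]
  have h3 : Nat.card (Fin n) = n := by simp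
  omega

lemma construction (n k : ℕ) (hk : 2 ≤ k) (hn : 3 * k ≤ n)
    (G : SimpleGraph (Fin n))
    (hG : ∀ u v : Fin n, G.Adj u v ↔ u ≠ v ∧ ((u : ℕ) < k ∨ (v : ℕ) < k))
    (S : Set (Fin n)) (hS : S.ncard = k) :
    ∃ f : Fin k → G.Subgraph, (∀ i, IsSteinerTree G S (f i)) ∧
      ∀ i j, i ≠ j → Disjoint (f i).edgeSet (f j).edgeSet ∧
        (f i).verts ∩ (f j).verts = S := by
  classical
  have hkn : k ≤ n := by omega
  have hE : k ≤ (({v : Fin n | k ≤ (v : ℕ)} \ S : Set (Fin n))).ncard := by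
    have h1 := ncard_ge_k n k hkn
    have h2 : ({v : Fin n | k ≤ (v : ℕ)} : Set (Fin n)) ⊆
        ({v : Fin n | k ≤ (v : ℕ)} \ S) ∪ S := by
      intro v hv
      by_cases h : v ∈ S
      · exact Or.inr h
      · exact Or.inl ⟨hv, h⟩
    have h3 := Set.ncard_le_ncard h2 (Set.toFinite _)
    have h4 := Set.ncard_union_le ({v : Fin n | k ≤ (v : ℕ)} \ S) S
    omega
  obtain ⟨Tset, hTsub, hTcard⟩ := Set.exists_subset_card_eq hE
  have hTk : Nat.card ↥Tset = k := by rw [Nat.card_coe_set_eq]; exact hTcard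
  obtain ⟨e⟩ : Nonempty (↥Tset ≃ Fin k) := ⟨Finite.equivFinOfCardEq hTk⟩
  set u : Fin k → Fin n := fun i => ((e.symm i : ↥Tset) : Fin n) with hudef
  have huinj : Function.Injective u := by
    intro a b hab
    have := Subtype.coe_injective hab
    simpa using congrArg e this
  have huk : ∀ i, k ≤ (u i : ℕ) := fun i => (hTsub (e.symm i).2).1
  have huS : ∀ i, u i ∉ S := fun i => (hTsub (e.symm i).2).2
  set ci : Fin k → Fin n := fun i => (⟨i.1, lt_of_lt_of_le i.2 hkn⟩ : Fin n) with hcidef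
  have hci_lt : ∀ i, (ci i : ℕ) < k := fun i => i.2
  have hci_inj : Function.Injective ci := fun a b hab => by
    apply Fin.ext; simpa [Fin.ext_iff] using hab
  set ct : Fin k → Fin n := fun i => if (ci i) ∈ S then u i else ci i with hctdef
  have hctS : ∀ i, ct i ∉ S := by
    intro i; simp only [hctdef]; split
    · exact huS i
    · assumption
  have hct_cases : ∀ i, ct i = ci i ∨ k ≤ (ct i : ℕ) := by
    intro i; simp only [hctdef]; split
    · exact Or.inr (huk i)
    · exact Or.inl rfl
  have d2 : ∀ i j, i ≠ j → ct i ≠ ci j := by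
    intro i j hij h
    rcases hct_cases i with h1 | h1
    · exact hij (hci_inj (h1 ▸ h))
    · rw [h] at h1; exact absurd (hci_lt j) (by omega)
  have d3 : ∀ i j, i ≠ j → ct i ≠ ct j := by
    intro i j hij h
    simp only [hctdef] at h
    split at h <;> split at h
    · exact hij (huinj h)
    · have h2 := congrArg Fin.val h
      have := huk i; have := hci_lt j
      omega
    · have h2 := congrArg Fin.val h
      have := huk j; have := hci_lt i
      omega
    · exact hij (hci_inj h)
  have hcadj : ∀ i, ∀ y ∈ S, k ≤ (y : ℕ) → G.Adj (ci i) y := by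
    intro i y hy hyk
    rw [hG]
    have := hci_lt i
    exact ⟨fun h => by rw [← h] at hyk; omega, Or.inl (hci_lt i)⟩
  have htadj : ∀ i, ∀ y ∈ S, (y : ℕ) < k → G.Adj (ct i) y := by
    intro i y hy hyk
    rw [hG]
    exact ⟨fun h => hctS i (h ▸ hy), Or.inr hyk⟩
  refine ⟨fun i => dstar G k S (ci i) (ct i) (hcadj i) (htadj i), ?_, ?_⟩
  · intro i
    refine ⟨Set.subset_union_left, ?_⟩
    apply dstar_isTree
    by_cases h : ci i ∈ S
    · exact Or.inr ⟨h, hci_lt i⟩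
    · simp only [hctdef]
      exact Or.inl (by rw [if_neg h])
  · intro i j hij
    constructor
    · rw [Set.disjoint_left]
      intro e he1 he2
      induction e using Sym2.ind with
      | _ x y =>
        rcases dstar_adj_cases (Subgraph.mem_edgeSet.1 he1) with
            ⟨b, hbS, hbk, hb⟩ | ⟨a, haS, hak, ha⟩ <;>
          rcases dstar_adj_cases (Subgraph.mem_edgeSet.1 he2) with
            ⟨b', hbS', hbk', hb'⟩ | ⟨a', haS', hak', ha'⟩
        · rw [hb] at hb'
          rcases Sym2.eq_iff.1 hb' with ⟨h1, h2⟩ | ⟨h1, h2⟩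
          · exact hij (hci_inj h1)
          · have h3 := congrArg Fin.val h1; have := hci_lt i; omega
        · rw [hb] at ha'
          rcases Sym2.eq_iff.1 ha' with ⟨h1, h2⟩ | ⟨h1, h2⟩
          · exact d2 j i (Ne.symm hij) h1.symm
          · exact hctS j (h2 ▸ hbS)
        · rw [ha] at hb'
          rcases Sym2.eq_iff.1 hb' with ⟨h1, h2⟩ | ⟨h1, h2⟩
          · exact d2 i j hij h1
          · exact hctS i (h1 ▸ hbS')
        · rw [ha] at ha'
          rcases Sym2.eq_iff.1 ha' with ⟨h1, h2⟩ | ⟨h1, h2⟩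
          · exact d3 i j hij h1
          · exact hctS i (h1 ▸ haS')
    · ext x
      constructor
      · rintro ⟨hx1, hx2⟩
        rcases hx1 with h | h
        · exact h
        · rcases hx2 with h' | h'
          · exact h'
          · exfalso
            simp only [Set.mem_insert_iff, Set.mem_singleton_iff] at h h'
            rcases h with rfl | rfl <;> rcases h' with h'' | h''
            · exact hij (hci_inj h'')
            · exact d2 j i (Ne.symm hij) h''.symm
            · exact d2 i j hij h''
            · exact d3 i j hij h''
      · intro hx; exact ⟨Or.inl hx, Or.inl hx⟩

theorem main_parts (n k : ℕ) (hk : 2 ≤ k) (hn : 3 * k ≤ n)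
    (G : SimpleGraph (Fin n))
    (hG : ∀ u v : Fin n, G.Adj u v ↔ u ≠ v ∧ ((u : ℕ) < k ∨ (v : ℕ) < k)) :
    vertConn G = k ∧ edgeConn G = k ∧ minDeg G = k := by
  classical
  have hkn : k ≤ n := by omega
  have hnb_hi : ∀ v : Fin n, k ≤ (v : ℕ) → G.neighborSet v = {w : Fin n | (w : ℕ) < k} := by
    intro v hv
    ext w
    simp only [mem_neighborSet, hG, Set.mem_setOf_eq]
    constructor
    · rintro ⟨h1, h2 | h2⟩
      · omega
      · exact h2
    · intro hw
      exact ⟨fun h => by rw [h] at hv; omega, Or.inr hw⟩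
  have vstar : Fin n := ⟨n - 1, by omega⟩
  have hknb : (G.neighborSet (⟨n - 1, by omega⟩ : Fin n)).ncard = k := by
    rw [hnb_hi _ (by simp; omega)]
    exact ncard_lt_k n k hkn
  have hmd : minDeg G = k := by
    apply le_antisymm
    · exact Nat.sInf_le ⟨⟨n - 1, by omega⟩, hknb⟩
    · refine le_csInf ⟨k, ⟨n - 1, by omega⟩, hknb⟩ ?_
      rintro d ⟨v, rfl⟩
      by_cases hv : k ≤ (v : ℕ)
      · rw [hnb_hi v hv, ncard_lt_k n k hkn]
      · have hset : G.neighborSet v = {v}ᶜ := by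
          ext w
          simp only [mem_neighborSet, hG, Set.mem_compl_iff, Set.mem_singleton_iff]
          constructor
          · rintro ⟨h1, -⟩; exact fun h => h1 h.symm
          · intro hw; exact ⟨fun h => hw h.symm, Or.inl (by omega)⟩
        rw [hset]
        have h1 := Set.ncard_add_ncard_compl ({v} : Set (Fin n))
        have h2 : ({v} : Set (Fin n)).ncard = 1 := Set.ncard_singleton v
        have h3 : Nat.card (Fin n) = n := by simp
        omega
  have hvc : vertConn G = k := by
    apply le_antisymm
    · apply Nat.sInf_le
      refine ⟨{v : Fin n | (v : ℕ) < k}, ncard_lt_k n k hkn, ?_⟩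
      intro hcon
      have hm1 : (⟨k, by omega⟩ : Fin n) ∈ ({v : Fin n | (v : ℕ) < k}ᶜ : Set (Fin n)) := by
        simp
      have hm2 : (⟨k + 1, by omega⟩ : Fin n) ∈ ({v : Fin n | (v : ℕ) < k}ᶜ : Set (Fin n)) := by
        simp
      obtain ⟨w⟩ := hcon.preconnected ⟨_, hm1⟩ ⟨_, hm2⟩
      have hne : (⟨_, hm1⟩ : ↥({v : Fin n | (v : ℕ) < k}ᶜ : Set (Fin n))) ≠ ⟨_, hm2⟩ := by
        simp [Subtype.ext_iff, Fin.ext_iff]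
      obtain ⟨z, hadj, -, -⟩ := Walk.exists_eq_cons_of_ne hne w
      have hz := z.2
      simp only [Set.mem_compl_iff, Set.mem_setOf_eq, not_lt] at hz
      have : G.Adj ⟨k, by omega⟩ z.1 := hadj
      rw [hG] at this
      rcases this with ⟨-, h | h⟩
      · simp at h
      · omega
    · apply le_csInf
      · refine ⟨k, {v : Fin n | (v : ℕ) < k}, ncard_lt_k n k hkn, ?_⟩
        intro hcon
        have hm1 : (⟨k, by omega⟩ : Fin n) ∈ ({v : Fin n | (v : ℕ) < k}ᶜ : Set (Fin n)) := by
          simp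
        have hm2 : (⟨k + 1, by omega⟩ : Fin n) ∈ ({v : Fin n | (v : ℕ) < k}ᶜ : Set (Fin n)) := by
          simp
        obtain ⟨w⟩ := hcon.preconnected ⟨_, hm1⟩ ⟨_, hm2⟩
        have hne : (⟨_, hm1⟩ : ↥({v : Fin n | (v : ℕ) < k}ᶜ : Set (Fin n))) ≠ ⟨_, hm2⟩ := by
          simp [Subtype.ext_iff, Fin.ext_iff]
        obtain ⟨z, hadj, -, -⟩ := Walk.exists_eq_cons_of_ne hne w
        have hz := z.2
        simp only [Set.mem_compl_iff, Set.mem_setOf_eq, not_lt] at hz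
        have : G.Adj ⟨k, by omega⟩ z.1 := hadj
        rw [hG] at this
        rcases this with ⟨-, h | h⟩
        · simp at h
        · omega
      · rintro m ⟨A, rfl, hA⟩
        by_contra hlt
        push_neg at hlt
        apply hA
        have hns : ¬ {v : Fin n | (v : ℕ) < k} ⊆ A := by
          intro hsub
          have := Set.ncard_le_ncard hsub (Set.toFinite _)
          rw [ncard_lt_k n k hkn] at this
          omega
        obtain ⟨c, hck, hcA⟩ := Set.not_subset.1 hns
        haveI : Nonempty ↥(Aᶜ : Set (Fin n)) := ⟨⟨c, hcA⟩⟩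
        have hre : ∀ x : ↥(Aᶜ : Set (Fin n)),
            (G.induce (Aᶜ : Set (Fin n))).Reachable x ⟨c, hcA⟩ := by
          rintro ⟨x, hx⟩
          by_cases hxc : x = c
          · exact (show (⟨x, hx⟩ : ↥(Aᶜ : Set (Fin n))) = ⟨c, hcA⟩ from Subtype.ext hxc) ▸
              Reachable.refl _
          · refine Adj.reachable ?_
            show G.Adj x c
            rw [hG]
            exact ⟨hxc, Or.inr hck⟩
        exact ⟨fun a b => (hre a).trans (hre b).symm⟩
  have hec : edgeConn G = k := by
    apply le_antisymm
    · apply Nat.sInf_le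
      refine ⟨(fun w => s((⟨n - 1, by omega⟩ : Fin n), w)) '' {v : Fin n | (v : ℕ) < k},
        ?_, ?_, ?_⟩
      · rintro e ⟨w, hw, rfl⟩
        rw [mem_edgeSet, hG]
        exact ⟨fun h => by rw [← h] at hw; simp at hw; omega, Or.inr hw⟩
      · rw [Set.ncard_image_of_injOn, ncard_lt_k n k hkn]
        intro a ha b hb hab
        rcases Sym2.eq_iff.1 hab with ⟨-, h⟩ | ⟨h1, h2⟩
        · exact h
        · exfalso
          have := congrArg Fin.val h1
          simp only [Set.mem_setOf_eq] at ha hb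
          simp at this
          omega
      · intro hcon
        obtain ⟨w⟩ := hcon.preconnected ⟨n - 1, by omega⟩ ⟨0, by omega⟩
        have hne : (⟨n - 1, by omega⟩ : Fin n) ≠ ⟨0, by omega⟩ := by
          simp [Fin.ext_iff]; omega
        obtain ⟨z, hadj, -, -⟩ := Walk.exists_eq_cons_of_ne hne w
        rw [deleteEdges_adj] at hadj
        obtain ⟨hadj1, hadj2⟩ := hadj
        rw [hG] at hadj1
        rcases hadj1 with ⟨-, h | h⟩
        · simp at h; omega
        · exact hadj2 ⟨z, h, rfl⟩
    · apply le_csInf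
      · refine ⟨k, (fun w => s((⟨n - 1, by omega⟩ : Fin n), w)) '' {v : Fin n | (v : ℕ) < k},
          ?_, ?_, ?_⟩
        · rintro e ⟨w, hw, rfl⟩
          rw [mem_edgeSet, hG]
          exact ⟨fun h => by rw [← h] at hw; simp at hw; omega, Or.inr hw⟩
        · rw [Set.ncard_image_of_injOn, ncard_lt_k n k hkn]
          intro a ha b hb hab
          rcases Sym2.eq_iff.1 hab with ⟨-, h⟩ | ⟨h1, h2⟩
          · exact h
          · exfalso
            have := congrArg Fin.val h1
            simp only [Set.mem_setOf_eq] at ha hb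
            simp at this
            omega
        · intro hcon
          obtain ⟨w⟩ := hcon.preconnected ⟨n - 1, by omega⟩ ⟨0, by omega⟩
          have hne : (⟨n - 1, by omega⟩ : Fin n) ≠ ⟨0, by omega⟩ := by
            simp [Fin.ext_iff]; omega
          obtain ⟨z, hadj, -, -⟩ := Walk.exists_eq_cons_of_ne hne w
          rw [deleteEdges_adj] at hadj
          obtain ⟨hadj1, hadj2⟩ := hadj
          rw [hG] at hadj1
          rcases hadj1 with ⟨-, h | h⟩
          · simp at h; omega
          · exact hadj2 ⟨z, h, rfl⟩
      · rintro m ⟨M, hM, rfl, hMc⟩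
        by_contra hlt
        push_neg at hlt
        apply hMc
        set z0 : Fin n := ⟨0, by omega⟩ with hz0
        have hz0k : (z0 : ℕ) < k := by simp [hz0]; omega
        -- every low vertex reaches z0
        have claimA : ∀ c : Fin n, (c : ℕ) < k → (G.deleteEdges M).Reachable c z0 := by
          intro c hck
          by_cases hc0 : c = z0
          · exact hc0 ▸ Reachable.refl c
          · -- find a good high vertex
            have : ∃ v : Fin n, k ≤ (v : ℕ) ∧ s(c, v) ∉ M ∧ s(z0, v) ∉ M := by
              by_contra hall
              push_neg at hall
              set g : Fin n → Sym2 (Fin n) :=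
                fun v => if s(c, v) ∈ M then s(c, v) else s(z0, v) with hg
              have himg : g '' {v : Fin n | k ≤ (v : ℕ)} ⊆ M := by
                rintro e ⟨v, hv, rfl⟩
                simp only [hg]
                split
                · assumption
                · exact hall v hv (by assumption)
              have hinj : Set.InjOn g {v : Fin n | k ≤ (v : ℕ)} := by
                intro a ha b hb hab
                simp only [Set.mem_setOf_eq] at ha hb
                simp only [hg] at hab
                split at hab <;> split at hab <;>
                  rcases Sym2.eq_iff.1 hab with ⟨h1, h2⟩ | ⟨h1, h2⟩
                · exact h2
                · exfalso; have := congrArg Fin.val h1; omega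
                · exfalso; have := congrArg Fin.val h1
                  have := congrArg Fin.val h2
                  simp [hz0] at *
                  omega
                · exfalso; have := congrArg Fin.val h1; omega
                · exfalso; have h1' := congrArg Fin.val h1
                  have h2' := congrArg Fin.val h2
                  simp [hz0] at h1' h2'
                  omega
                · exfalso; have := congrArg Fin.val h2; omega
                · exact h2
                · exfalso; have := congrArg Fin.val h1
                  simp [hz0] at this
                  omega
              have hle1 := Set.ncard_le_ncard himg (Set.toFinite M)
              rw [Set.ncard_image_of_injOn hinj] at hle1
              rw [ncard_ge_k n k hkn] at hle1
              omega
            obtain ⟨v, hvk, hv1, hv2⟩ := this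
            have ha1 : (G.deleteEdges M).Adj c v := by
              rw [deleteEdges_adj, hG]
              exact ⟨⟨fun h => by rw [h] at hck; omega, Or.inl hck⟩, hv1⟩
            have ha2 : (G.deleteEdges M).Adj z0 v := by
              rw [deleteEdges_adj, hG]
              exact ⟨⟨fun h => by rw [h] at hz0k; omega, Or.inl hz0k⟩, hv2⟩
            exact ha1.reachable.trans ha2.reachable.symm
        have claimB : ∀ v : Fin n, (G.deleteEdges M).Reachable v z0 := by
          intro v
          by_cases hvk : (v : ℕ) < k
          · exact claimA v hvk
          · push_neg at hvk
            have : ∃ j : Fin n, (j : ℕ) < k ∧ s(v, j) ∉ M := by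
              by_contra hall
              push_neg at hall
              have himg : (fun j => s(v, j)) '' {j : Fin n | (j : ℕ) < k} ⊆ M := by
                rintro e ⟨j, hj, rfl⟩
                exact hall j hj
              have hinj : Set.InjOn (fun j => s(v, j)) {j : Fin n | (j : ℕ) < k} := by
                intro a ha b hb hab
                simp only [Set.mem_setOf_eq] at ha hb
                rcases Sym2.eq_iff.1 hab with ⟨-, h⟩ | ⟨h1, h2⟩
                · exact h
                · exfalso; have := congrArg Fin.val h1; omega
              have hle1 := Set.ncard_le_ncard himg (Set.toFinite M)
              rw [Set.ncard_image_of_injOn hinj] at hle1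
              rw [ncard_lt_k n k hkn] at hle1
              omega
            obtain ⟨j, hjk, hj⟩ := this
            have ha1 : (G.deleteEdges M).Adj v j := by
              rw [deleteEdges_adj, hG]
              exact ⟨⟨fun h => by rw [h] at hvk; omega, Or.inr hjk⟩, hj⟩
            exact ha1.reachable.trans (claimA j hjk)
        haveI : Nonempty (Fin n) := ⟨z0⟩
        exact ⟨fun a b => (claimB a).trans (claimB b).symm⟩
  exact ⟨hvc, hec, hmd⟩

theorem gen_parts (n k : ℕ) (hk : 2 ≤ k) (hn : 3 * k ≤ n)
    (G : SimpleGraph (Fin n))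
    (hG : ∀ u v : Fin n, G.Adj u v ↔ u ≠ v ∧ ((u : ℕ) < k ∨ (v : ℕ) < k)) :
    genConn G k = k ∧ genEdgeConn G k = k := by
  classical
  have hkn : k ≤ n := by omega
  have hnb_hi : ∀ v : Fin n, k ≤ (v : ℕ) → G.neighborSet v = {w : Fin n | (w : ℕ) < k} := by
    intro v hv
    ext w
    simp only [mem_neighborSet, hG, Set.mem_setOf_eq]
    constructor
    · rintro ⟨h1, h2 | h2⟩
      · omega
      · exact h2
    · intro hw
      exact ⟨fun h => by rw [h] at hv; omega, Or.inr hw⟩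
  -- lower bounds for every S
  have hlower : ∀ S : Set (Fin n), S.ncard = k →
      k ≤ steinerConn G S ∧ k ≤ steinerEdgeConn G S := by
    intro S hS
    obtain ⟨f, hf1, hf2⟩ := construction n k hk hn G hG S hS
    obtain ⟨s, t, hs, ht, hst⟩ := (Set.one_lt_ncard_iff (Set.toFinite S)).1 (by omega)
    constructor
    · refine le_csSup ⟨(G.neighborSet s).ncard, ?_⟩ ⟨f, hf1, hf2⟩
      rintro m ⟨g, hg1, hg2⟩
      exact steiner_count_bound hg1 (fun i j hij => (hg2 i j hij).1) hs ht hst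
    · refine le_csSup ⟨(G.neighborSet s).ncard, ?_⟩
        ⟨f, hf1, fun i j hij => (hf2 i j hij).1⟩
      rintro m ⟨g, hg1, hg2⟩
      exact steiner_count_bound hg1 hg2 hs ht hst
  -- the special set S0
  set S0 : Set (Fin n) := {v : Fin n | k ≤ (v : ℕ) ∧ (v : ℕ) < 2 * k} with hS0def
  have hS0 : S0.ncard = k := by
    have hrange : S0 = Set.range (fun i : Fin k => (⟨k + i.1, by omega⟩ : Fin n)) := by
      ext v
      simp only [hS0def, Set.mem_setOf_eq, Set.mem_range]
      constructor
      · rintro ⟨h1, h2⟩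
        exact ⟨⟨v.1 - k, by omega⟩, by apply Fin.ext; simp; omega⟩
      · rintro ⟨i, rfl⟩
        have := i.2
        constructor <;> simp <;> omega
    rw [hrange, ← Nat.card_coe_set_eq, Nat.card_range_of_injective ?_]
    · simp
    · intro a b hab
      apply Fin.ext
      have := congrArg Fin.val hab
      simp at this
      omega
  have hs0 : (⟨k, by omega⟩ : Fin n) ∈ S0 := by
    simp only [hS0def, Set.mem_setOf_eq]
    exact ⟨by omega, by show k < 2 * k; omega⟩
  have ht0 : (⟨k + 1, by omega⟩ : Fin n) ∈ S0 := by
    simp only [hS0def, Set.mem_setOf_eq]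
    exact ⟨by show k ≤ k + 1; omega, by show k + 1 < 2 * k; omega⟩
  have hne0 : (⟨k, by omega⟩ : Fin n) ≠ (⟨k + 1, by omega⟩ : Fin n) := by
    simp [Fin.ext_iff]
  have hnb0 : (G.neighborSet (⟨k, by omega⟩ : Fin n)).ncard = k := by
    rw [hnb_hi _ (by simp)]
    exact ncard_lt_k n k hkn
  -- upper bounds for S0
  have hupC : steinerConn G S0 ≤ k := by
    unfold steinerConn
    apply csSup_le
    · exact ⟨0, Fin.elim0, fun i => i.elim0, fun i j hij => i.elim0⟩
    rintro m ⟨g, hg1, hg2⟩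
    calc m ≤ (G.neighborSet (⟨k, by omega⟩ : Fin n)).ncard :=
          steiner_count_bound hg1 (fun i j hij => (hg2 i j hij).1) hs0 ht0 hne0
      _ = k := hnb0
  have hupE : steinerEdgeConn G S0 ≤ k := by
    unfold steinerEdgeConn
    apply csSup_le
    · exact ⟨0, Fin.elim0, fun i => i.elim0, fun i j hij => i.elim0⟩
    rintro m ⟨g, hg1, hg2⟩
    calc m ≤ (G.neighborSet (⟨k, by omega⟩ : Fin n)).ncard :=
          steiner_count_bound hg1 hg2 hs0 ht0 hne0
      _ = k := hnb0
  constructor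
  · apply le_antisymm
    · exact Nat.sInf_le ⟨S0, hS0, le_antisymm hupC (hlower S0 hS0).1⟩
    · refine le_csInf ⟨_, S0, hS0, rfl⟩ ?_
      rintro m ⟨S, hS, rfl⟩
      exact (hlower S hS).1
  · apply le_antisymm
    · exact Nat.sInf_le ⟨S0, hS0, le_antisymm hupE (hlower S0 hS0).2⟩
    · refine le_csInf ⟨_, S0, hS0, rfl⟩ ?_
      rintro m ⟨S, hS, rfl⟩
      exact (hlower S hS).2

theorem join_graph_connectivities (n k : ℕ) (hk : 2 ≤ k) (hn : 3 * k ≤ n)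
    (G : SimpleGraph (Fin n))
    (hG : ∀ u v : Fin n, G.Adj u v ↔ u ≠ v ∧ ((u : ℕ) < k ∨ (v : ℕ) < k)) :
    genConn G k = k ∧ genEdgeConn G k = k ∧ vertConn G = k ∧ edgeConn G = k ∧
      minDeg G = k := by
  obtain ⟨h1, h2⟩ := gen_parts n k hk hn G hG
  obtain ⟨h3, h4, h5⟩ := main_parts n k hk hn G hG
  exact ⟨h1, h2, h3, h4, h5⟩
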